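/- Let p ∈ [0,1] and let p̂ = (1/m)∑_{j=1}^m Z^{(j)}, where Z^{(1)},…,Z^{(m)} are independent Bernoulli random variables with mean p. Define φ_Err(z) := min{z, 1−z} for z ∈ [0,1]. Then −√(π/(2m)) ≤ E[φ_Err(p̂)] − φ_Err(p) ≤ 0. Furthermore, if p ≠ 1/2, then −p(1−p)/(m·|2p−1|) ≤ E[φ_Err(p̂)] − φ_Err(p) ≤ 0. -/

import Mathlib

open MeasureTheory Finset

lemma sum_prod_bool (m : ℕ) (g : Fin m → Bool → ℝ) :
    ∑ ω : Fin m → Bool, ∏ i, g i (ω i) = ∏ i, (g i true + g i false) := by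
  rw [← Fintype.piFinset_univ, ← Finset.prod_univ_sum]
  simp

lemma exp_coord (m : ℕ) (w : Bool → ℝ) (hw : w true + w false = 1) (j : Fin m) :
    ∑ ω : Fin m → Bool, (∏ i, w (ω i)) * (if ω j then (1:ℝ) else 0) = w true := by
  have h : ∀ ω : Fin m → Bool,
      (∏ i, w (ω i)) * (if ω j then (1:ℝ) else 0)
        = ∏ i, (fun i b => w b * if i = j then (if b then (1:ℝ) else 0) else 1) i (ω i) := by
    intro ω
    simp only
    rw [Finset.prod_mul_distrib, Finset.prod_ite_eq' univ j]
    simp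
  rw [Finset.sum_congr rfl (fun ω _ => h ω),
    sum_prod_bool m (fun i b => w b * if i = j then (if b then (1:ℝ) else 0) else 1)]
  have h2 : ∀ i : Fin m, (fun i b => w b * if i = j then (if b then (1:ℝ) else 0) else 1) i true
      + (fun i b => w b * if i = j then (if b then (1:ℝ) else 0) else 1) i false
      = if i = j then w true else 1 := by
    intro i; by_cases hij : i = j <;> simp [hij] <;> linarith
  rw [Finset.prod_congr rfl (fun i _ => h2 i), Finset.prod_ite_eq' univ j (fun _ => w true)]
  simp

lemma exp_coord2 (m : ℕ) (w : Bool → ℝ) (hw : w true + w false = 1) (j k : Fin m) (hjk : j ≠ k) :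
    ∑ ω : Fin m → Bool, (∏ i, w (ω i)) * ((if ω j then (1:ℝ) else 0) * (if ω k then (1:ℝ) else 0))
      = w true * w true := by
  have h : ∀ ω : Fin m → Bool,
      (∏ i, w (ω i)) * ((if ω j then (1:ℝ) else 0) * (if ω k then (1:ℝ) else 0))
        = ∏ i, (fun i b => w b * (if i = j then (if b then (1:ℝ) else 0) else 1)
            * (if i = k then (if b then (1:ℝ) else 0) else 1)) i (ω i) := by
    intro ω
    simp only
    rw [Finset.prod_mul_distrib, Finset.prod_mul_distrib,
      Finset.prod_ite_eq' univ j, Finset.prod_ite_eq' univ k]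
    simp [mul_assoc]
  rw [Finset.sum_congr rfl (fun ω _ => h ω),
    sum_prod_bool m (fun i b => w b * (if i = j then (if b then (1:ℝ) else 0) else 1)
            * (if i = k then (if b then (1:ℝ) else 0) else 1))]
  have h2 : ∀ i : Fin m,
      (fun i b => w b * (if i = j then (if b then (1:ℝ) else 0) else 1)
            * (if i = k then (if b then (1:ℝ) else 0) else 1)) i true
      + (fun i b => w b * (if i = j then (if b then (1:ℝ) else 0) else 1)
            * (if i = k then (if b then (1:ℝ) else 0) else 1)) i false
      = (if i = j then w true else 1) * (if i = k then w true else 1) := by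
    intro i; by_cases hij : i = j <;> by_cases hik : i = k <;> simp_all <;> linarith
  rw [Finset.prod_congr rfl (fun i _ => h2 i), Finset.prod_mul_distrib,
    Finset.prod_ite_eq' univ j (fun _ => w true), Finset.prod_ite_eq' univ k (fun _ => w true)]
  simp

lemma sum_weights (m : ℕ) (w : Bool → ℝ) (hw : w true + w false = 1) :
    ∑ ω : Fin m → Bool, ∏ i, w (ω i) = 1 := by
  rw [sum_prod_bool m (fun _ b => w b)]
  simp [hw]

lemma moment1 (m : ℕ) (w : Bool → ℝ) (hw : w true + w false = 1) :
    ∑ ω : Fin m → Bool, (∏ i, w (ω i)) * (∑ j, if ω j then (1:ℝ) else 0) = m * w true := by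
  simp_rw [Finset.mul_sum]
  rw [Finset.sum_comm]
  rw [Finset.sum_congr rfl (fun j _ => exp_coord m w hw j)]
  simp [mul_comm]

lemma moment2 (m : ℕ) (w : Bool → ℝ) (hw : w true + w false = 1) :
    ∑ ω : Fin m → Bool, (∏ i, w (ω i)) * (∑ j, if ω j then (1:ℝ) else 0)^2
      = m * w true + ((m:ℝ)^2 - m) * (w true)^2 := by
  have key : ∀ ω : Fin m → Bool, (∏ i, w (ω i)) * (∑ j, if ω j then (1:ℝ) else 0)^2
      = ∑ j, ∑ k, (∏ i, w (ω i)) * ((if ω j then (1:ℝ) else 0) * (if ω k then (1:ℝ) else 0)) := by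
    intro ω
    rw [sq, Finset.sum_mul_sum]
    rw [Finset.mul_sum]
    exact Finset.sum_congr rfl fun j _ => by rw [Finset.mul_sum]
  rw [Finset.sum_congr rfl (fun ω _ => key ω), Finset.sum_comm]
  have inner : ∀ j : Fin m, ∑ ω : Fin m → Bool, ∑ k,
      (∏ i, w (ω i)) * ((if ω j then (1:ℝ) else 0) * (if ω k then (1:ℝ) else 0))
      = m * (w true)^2 + (w true - (w true)^2) := by
    intro j
    rw [Finset.sum_comm]
    have hk : ∀ k : Fin m, ∑ ω : Fin m → Bool,
        (∏ i, w (ω i)) * ((if ω j then (1:ℝ) else 0) * (if ω k then (1:ℝ) else 0))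
        = (w true)^2 + (if k = j then w true - (w true)^2 else 0) := by
      intro k
      by_cases hjk : j = k
      · subst hjk
        have : ∀ ω : Fin m → Bool,
            (∏ i, w (ω i)) * ((if ω j then (1:ℝ) else 0) * (if ω j then (1:ℝ) else 0))
            = (∏ i, w (ω i)) * (if ω j then (1:ℝ) else 0) := by
          intro ω; by_cases h : ω j <;> simp [h]
        rw [Finset.sum_congr rfl (fun ω _ => this ω), exp_coord m w hw j]
        simp
      · rw [exp_coord2 m w hw j k hjk]
        simp [Ne.symm hjk, sq]
    rw [Finset.sum_congr rfl (fun k _ => hk k), Finset.sum_add_distrib,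
      Finset.sum_ite_eq' Finset.univ j]
    simp [mul_comm]
  rw [Finset.sum_congr rfl (fun j _ => inner j)]
  simp
  ring

lemma phi_min_eq (z : ℝ) : min z (1 - z) = (1 - |2*z - 1|)/2 := by
  rcases le_total z (1-z) with h | h
  · rw [min_eq_left h, abs_of_nonpos (by linarith)]; ring
  · rw [min_eq_right h, abs_of_nonneg (by linarith)]; ring

lemma abs_two_lip (p z : ℝ) : |2*z-1| ≤ |2*p-1| + 2*|z-p| := by
  rcases abs_cases (2*z-1) with ⟨h1,_⟩|⟨h1,_⟩ <;> rcases abs_cases (2*p-1) with ⟨h2,_⟩|⟨h2,_⟩ <;>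
    rcases abs_cases (z-p) with ⟨h3,_⟩|⟨h3,_⟩ <;> linarith

lemma amgm_abs (x s : ℝ) (hs : 0 < s) : |x| ≤ (x^2 + s^2)/(2*s) := by
  rw [le_div_iff₀ (by linarith)]
  nlinarith [sq_nonneg (|x| - s), sq_abs x, abs_nonneg x]

lemma tangent_plus_quad (p z : ℝ) (ha : 0 < |2*p-1|) :
    |2*z-1| ≤ |2*p-1| + (if 1/2 ≤ p then (1:ℝ) else -1)*(2*z-2*p) + 2*(z-p)^2/|2*p-1| := by
  have key : (|2*z-1| - |2*p-1| - (if 1/2 ≤ p then (1:ℝ) else -1)*(2*z-2*p)) * |2*p-1|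
      ≤ 2*(z-p)^2 := by
    rcases abs_cases (2*z-1) with ⟨h1,h1'⟩|⟨h1,h1'⟩ <;>
      rcases abs_cases (2*p-1) with ⟨h2,h2'⟩|⟨h2,h2'⟩ <;> split_ifs with h <;>
      nlinarith [sq_nonneg (z - p), sq_nonneg (z + p - 1), sq_nonneg (z - p + (2*p-1)),
        sq_nonneg (z - p - (2*p-1)), sq_nonneg (z + p - 1 + (2*p-1)), sq_nonneg (z + p - 1 - (2*p-1))]
  have h2 := (le_div_iff₀ ha).mpr key
  linarith

lemma var_le_pi (p : ℝ) (m : ℝ) (hm : 0 < m) : p*(1-p)/m ≤ Real.pi/(2*m) := by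
  rw [div_le_div_iff₀ hm (by positivity)]
  nlinarith [Real.pi_gt_three, sq_nonneg (2*p-1), hm]

lemma two_div_helper (a v m : ℝ) (ha : a ≠ 0) (hm : m ≠ 0) :
    2/a*(v/m) = 2*(v/(m*a)) := by field_simp

open MeasureTheory

theorem jensen_gap_pointwise_bayes_error
    (p : ℝ) (hp : p ∈ Set.Icc (0 : ℝ) 1) (m : ℕ) (hm : 0 < m) :
    let P : Measure (Fin m → Bool) :=
      (Measure.pi fun _ : Fin m =>
        (PMF.bernoulli (Real.toNNReal p) (Real.toNNReal_le_one.mpr hp.2)).toMeasure);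
    let phiErr : ℝ → ℝ := (fun z => min z (1 - z));
    let phat : (Fin m → Bool) → ℝ :=
      (fun ω => (∑ j : Fin m, if ω j then (1 : ℝ) else 0) / m);
    (-Real.sqrt (Real.pi / (2 * (m : ℝ))) ≤ (∫ ω, phiErr (phat ω) ∂P) - phiErr p ∧
      (∫ ω, phiErr (phat ω) ∂P) - phiErr p ≤ 0) ∧
    (p ≠ 1 / 2 →
      -(p * (1 - p) / ((m : ℝ) * |2 * p - 1|)) ≤ (∫ ω, phiErr (phat ω) ∂P) - phiErr p ∧
      (∫ ω, phiErr (phat ω) ∂P) - phiErr p ≤ 0) := by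
  intro P phiErr phat
  have hm' : (0:ℝ) < m := Nat.cast_pos.mpr hm
  set w : Bool → ℝ := fun b => if b then p else 1 - p with hwdef
  have hw : w true + w false = 1 := by simp [hwdef]
  have hwt : w true = p := rfl
  have hw0 : ∀ b, 0 ≤ w b := by
    intro b; cases b <;> simp [hwdef] <;> linarith [hp.1, hp.2]
  have hW0 : ∀ ω : Fin m → Bool, 0 ≤ ∏ i, w (ω i) :=
    fun ω => Finset.prod_nonneg fun i _ => hw0 (ω i)
  -- singleton measure
  have hsing : ∀ ω : Fin m → Bool, (P {ω}).toReal = ∏ i, w (ω i) := by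
    intro ω
    show ((Measure.pi fun _ : Fin m =>
        (PMF.bernoulli (Real.toNNReal p) (Real.toNNReal_le_one.mpr hp.2)).toMeasure) {ω}).toReal = _
    rw [← Set.univ_pi_singleton, Measure.pi_pi, ENNReal.toReal_prod]
    refine Finset.prod_congr rfl fun j _ => ?_
    rw [PMF.toMeasure_apply_singleton _ _ (measurableSet_singleton _), PMF.bernoulli_apply]
    cases h : ω j
    · show (1 - ((Real.toNNReal p : ENNReal))).toReal = _
      rw [← ENNReal.ofReal.eq_def, ← ENNReal.ofReal_one, ← ENNReal.ofReal_sub _ hp.1,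
        ENNReal.toReal_ofReal (by linarith [hp.2])]
      simp [hwdef]
    · show ((Real.toNNReal p : ENNReal)).toReal = _
      rw [← ENNReal.ofReal.eq_def, ENNReal.toReal_ofReal hp.1]
      simp [hwdef]
  have hPfin : IsProbabilityMeasure P := by
    show IsProbabilityMeasure (Measure.pi _); infer_instance
  have hint : ∀ f : ((Fin m → Bool) → ℝ),
      ∫ ω, f ω ∂P = ∑ ω : Fin m → Bool, (∏ i, w (ω i)) * f ω := by
    intro f
    rw [integral_fintype Integrable.of_finite]
    exact Finset.sum_congr rfl fun ω _ => by rw [measureReal_def, hsing ω, smul_eq_mul]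
  -- moments
  have h0 : ∑ ω : Fin m → Bool, (∏ i, w (ω i)) = 1 := sum_weights m w hw
  have h1 : ∑ ω : Fin m → Bool, (∏ i, w (ω i)) * (∑ j, if ω j then (1:ℝ) else 0) = m * p := by
    rw [moment1 m w hw, hwt]
  have h2 : ∑ ω : Fin m → Bool, (∏ i, w (ω i)) * (∑ j, if ω j then (1:ℝ) else 0)^2
      = m * p + ((m:ℝ)^2 - m) * p^2 := by
    rw [moment2 m w hw, hwt]
  have hphat : ∀ ω, phat ω = (∑ j, if ω j then (1:ℝ) else 0) / m := fun ω => rfl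
  have hexp : ∑ ω : Fin m → Bool, (∏ i, w (ω i)) * (2 * phat ω - 1) = 2*p - 1 := by
    have e : ∀ ω : Fin m → Bool, (∏ i, w (ω i)) * (2 * phat ω - 1)
        = (2/(m:ℝ)) * ((∏ i, w (ω i)) * (∑ j, if ω j then (1:ℝ) else 0)) - (∏ i, w (ω i)) := by
      intro ω; rw [hphat ω]; field_simp
    rw [Finset.sum_congr rfl fun ω _ => e ω, Finset.sum_sub_distrib, ← Finset.mul_sum, h1, h0]
    field_simp
  have hvar : ∑ ω : Fin m → Bool, (∏ i, w (ω i)) * (phat ω - p)^2 = p*(1-p)/m := by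
    have e : ∀ ω : Fin m → Bool, (∏ i, w (ω i)) * (phat ω - p)^2
        = (1/(m:ℝ)^2) * ((∏ i, w (ω i)) * (∑ j, if ω j then (1:ℝ) else 0)^2)
          - (2*p/(m:ℝ)) * ((∏ i, w (ω i)) * (∑ j, if ω j then (1:ℝ) else 0))
          + p^2 * (∏ i, w (ω i)) := by
      intro ω; rw [hphat ω]; field_simp; ring
    rw [Finset.sum_congr rfl fun ω _ => e ω, Finset.sum_add_distrib, Finset.sum_sub_distrib,
      ← Finset.mul_sum, ← Finset.mul_sum, ← Finset.mul_sum, h0, h1, h2]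
    field_simp
    ring
  set A := ∑ ω : Fin m → Bool, (∏ i, w (ω i)) * |2 * phat ω - 1| with hAdef
  have hI : (∫ ω, phiErr (phat ω) ∂P) = (1 - A)/2 := by
    rw [hint (fun ω => phiErr (phat ω)), hAdef]
    have e : ∀ ω : Fin m → Bool, (∏ i, w (ω i)) * phiErr (phat ω)
        = (∏ i, w (ω i)) / 2 - ((∏ i, w (ω i)) * |2 * phat ω - 1|) / 2 := by
      intro ω
      have : phiErr (phat ω) = (1 - |2 * phat ω - 1|)/2 := phi_min_eq (phat ω)
      rw [this]; ring
    rw [Finset.sum_congr rfl fun ω _ => e ω, Finset.sum_sub_distrib,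
      ← Finset.sum_div, ← Finset.sum_div, h0]
    ring
  have hphi : phiErr p = (1 - |2*p - 1|)/2 := phi_min_eq p
  have hgap : (∫ ω, phiErr (phat ω) ∂P) - phiErr p = (|2*p - 1| - A)/2 := by
    rw [hI, hphi]; ring
  -- Jensen lower bound on A
  have hA1 : |2*p - 1| ≤ A := by
    calc |2*p - 1| = |∑ ω : Fin m → Bool, (∏ i, w (ω i)) * (2 * phat ω - 1)| := by
          rw [hexp]
      _ ≤ ∑ ω : Fin m → Bool, |(∏ i, w (ω i)) * (2 * phat ω - 1)| :=
          Finset.abs_sum_le_sum_abs _ _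
      _ = A := by
          rw [hAdef]
          exact Finset.sum_congr rfl fun ω _ => by
            rw [abs_mul, abs_of_nonneg (hW0 ω)]
  have hub : (∫ ω, phiErr (phat ω) ∂P) - phiErr p ≤ 0 := by
    rw [hgap]; linarith only [hA1]
  constructor
  · refine ⟨?_, hub⟩
    -- lower bound 1
    set s : ℝ := Real.sqrt (Real.pi / (2 * (m:ℝ))) with hsdef
    have hpi : (0:ℝ) < Real.pi / (2*(m:ℝ)) := by positivity
    have hs : 0 < s := Real.sqrt_pos.mpr hpi
    have hs2 : s^2 = Real.pi / (2*(m:ℝ)) := Real.sq_sqrt hpi.le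
    have hAB : A ≤ ∑ ω : Fin m → Bool, (|2*p - 1| * (∏ i, w (ω i))
        + (1/s) * ((∏ i, w (ω i)) * (phat ω - p)^2) + s * (∏ i, w (ω i))) := by
      rw [hAdef]
      refine Finset.sum_le_sum fun ω _ => ?_
      have l1 := abs_two_lip p (phat ω)
      have l2 := amgm_abs (phat ω - p) s hs
      calc (∏ i, w (ω i)) * |2 * phat ω - 1|
          ≤ (∏ i, w (ω i)) * (|2*p - 1| + 2*(((phat ω - p)^2 + s^2)/(2*s))) := by
            refine mul_le_mul_of_nonneg_left ?_ (hW0 ω)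
            calc |2 * phat ω - 1| ≤ |2*p-1| + 2*|phat ω - p| := l1
              _ ≤ _ := by linarith
        _ = |2*p - 1| * (∏ i, w (ω i))
            + (1/s) * ((∏ i, w (ω i)) * (phat ω - p)^2) + s * (∏ i, w (ω i)) := by
            field_simp; ring
    have hsum : ∑ ω : Fin m → Bool, (|2*p - 1| * (∏ i, w (ω i))
        + (1/s) * ((∏ i, w (ω i)) * (phat ω - p)^2) + s * (∏ i, w (ω i)))
        = |2*p - 1| + (1/s) * (p*(1-p)/m) + s := by
      rw [Finset.sum_add_distrib, Finset.sum_add_distrib, ← Finset.mul_sum, ← Finset.mul_sum,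
        ← Finset.mul_sum, h0, hvar]
      ring
    have hvar_le : p*(1-p)/m ≤ s^2 := by
      rw [hs2]; exact var_le_pi p m hm'
    have hfin : (1/s) * (p*(1-p)/m) ≤ s := by
      rw [div_mul_eq_mul_div, one_mul, div_le_iff₀ hs]
      exact hvar_le.trans_eq (pow_two s)
    rw [hgap]
    rw [hsum] at hAB
    linarith only [hAB, hfin]
  · intro hp2
    refine ⟨?_, hub⟩
    have ha : 0 < |2*p - 1| := abs_pos.mpr (by intro h; apply hp2; linarith)
    set s' : ℝ := if 1/2 ≤ p then (1:ℝ) else -1 with hs'def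
    have hexp2 : ∑ ω : Fin m → Bool, (∏ i, w (ω i)) * (s' * (2 * phat ω - 2*p)) = 0 := by
      have e : ∀ ω : Fin m → Bool, (∏ i, w (ω i)) * (s' * (2 * phat ω - 2*p))
          = s' * ((∏ i, w (ω i)) * (2 * phat ω - 1)) - (s' * (2*p - 1)) * (∏ i, w (ω i)) := by
        intro ω; ring
      rw [Finset.sum_congr rfl fun ω _ => e ω, Finset.sum_sub_distrib, ← Finset.mul_sum,
        ← Finset.mul_sum, hexp, h0]
      ring
    have hAB : A ≤ ∑ ω : Fin m → Bool, (|2*p - 1| * (∏ i, w (ω i))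
        + (∏ i, w (ω i)) * (s' * (2 * phat ω - 2*p))
        + (2/|2*p - 1|) * ((∏ i, w (ω i)) * (phat ω - p)^2)) := by
      rw [hAdef]
      refine Finset.sum_le_sum fun ω _ => ?_
      have l1 := tangent_plus_quad p (phat ω) ha
      calc (∏ i, w (ω i)) * |2 * phat ω - 1|
          ≤ (∏ i, w (ω i)) * (|2*p-1| + s' * (2 * phat ω - 2*p) + 2*(phat ω - p)^2/|2*p-1|) :=
            mul_le_mul_of_nonneg_left l1 (hW0 ω)
        _ = _ := by field_simp
    have hsum : ∑ ω : Fin m → Bool, (|2*p - 1| * (∏ i, w (ω i))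
        + (∏ i, w (ω i)) * (s' * (2 * phat ω - 2*p))
        + (2/|2*p - 1|) * ((∏ i, w (ω i)) * (phat ω - p)^2))
        = |2*p - 1| + 2/|2*p - 1| * (p*(1-p)/m) := by
      rw [Finset.sum_add_distrib, Finset.sum_add_distrib, ← Finset.mul_sum, ← Finset.mul_sum,
        h0, hvar, hexp2]
      ring
    have hC : 2/|2*p - 1| * (p*(1-p)/m) = 2 * (p*(1-p)/((m:ℝ)*|2*p-1|)) :=
      two_div_helper _ _ _ ha.ne' hm'.ne'
    rw [hgap]
    rw [hsum, hC] at hAB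
    linarith only [hAB]
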